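/- Let g be an n-dimensional filiform Lie algebra with adapted basis {e_1,…,e_n}. Then for all indices i, j with 1 < i < z_1 and j > 1, the bracket [e_i, e_j] = 0, where z_1 = min{k ≥ 4 : [e_k, e_n] ≠ 0}. -/

import Mathlib

/-- A complex Lie algebra `L` of dimension `n` is filiform if its lower central series
`C^1 g = g`, `C^k g = ⁅C^{k-1} g, g⁆` (here `C^k g = LieModule.lowerCentralSeries ℂ L L (k-1)`)
satisfies `dim C^k g = n - k` for all `2 ≤ k ≤ n`. -/
def IsFiliform (L : Type*) [LieRing L] [LieAlgebra ℂ L] (n : ℕ) : Prop :=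
  Module.finrank ℂ L = n ∧
    ∀ k : ℕ, 2 ≤ k → k ≤ n →
      Module.finrank ℂ (LieModule.lowerCentralSeries ℂ L L (k - 1)) = n - k

/-- An adapted basis `e_1, …, e_n` of an `n`-dimensional filiform Lie algebra:
`⁅e_1, e_h⁆ = e_{h-1}` for `3 ≤ h ≤ n`, `⁅e_2, e_h⁆ = 0` for `1 ≤ h ≤ n`, and
`⁅e_3, e_h⁆ = 0` for `2 ≤ h ≤ n`.  The family `e` is indexed by `ℕ`, with
`e 1, …, e n` the members of the basis `b`. -/
structure AdaptedBasis (n : ℕ) (L : Type*) [LieRing L] [LieAlgebra ℂ L] where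
  b : Module.Basis (Fin n) ℂ L
  e : ℕ → L
  he : ∀ i : Fin n, e (i.1 + 1) = b i
  adapted1 : ∀ h, 3 ≤ h → h ≤ n → ⁅e 1, e h⁆ = e (h - 1)
  adapted2 : ∀ h, 1 ≤ h → h ≤ n → ⁅e 2, e h⁆ = 0
  adapted3 : ∀ h, 2 ≤ h → h ≤ n → ⁅e 3, e h⁆ = 0

/-- Let `g` be an `n`-dimensional non-model filiform Lie algebra with adapted basis
`e_1, …, e_n` and `z_1 = min {k ≥ 4 : ⁅e_k, e_n⁆ ≠ 0}`.  Then `⁅e_i, e_j⁆ = 0` for all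
`1 < i < z_1` and `j > 1`. -/
theorem bracket_eq_zero_of_lt_z1
    (n : ℕ) (L : Type*) [LieRing L] [LieAlgebra ℂ L] (hn : 5 ≤ n)
    (hfil : IsFiliform L n) (B : AdaptedBasis n L)
    (hnonmodel : ∃ k, 4 ≤ k ∧ k ≤ n ∧ ⁅B.e k, B.e n⁆ ≠ 0) :
    ∀ i j : ℕ, 1 < i → i < sInf {k | 4 ≤ k ∧ ⁅B.e k, B.e n⁆ ≠ 0} → 1 < j → j ≤ n →
      ⁅B.e i, B.e j⁆ = 0 := by
  set S : Set ℕ := {k | 4 ≤ k ∧ ⁅B.e k, B.e n⁆ ≠ 0} with hS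
  obtain ⟨k, hk4, hkn, hkne⟩ := hnonmodel
  have hkS : k ∈ S := ⟨hk4, hkne⟩
  have hz1n : sInf S ≤ n := le_trans (Nat.sInf_le hkS) hkn
  have main : ∀ i, 1 < i → i < sInf S → ∀ j, 1 < j → j ≤ n → ⁅B.e i, B.e j⁆ = 0 := by
    intro i
    induction i using Nat.strong_induction_on with
    | _ i IH =>
      intro hi1 hiS j hj1 hjn
      rcases Nat.lt_or_ge i 4 with hi4 | hi4
      · interval_cases i
        · exact B.adapted2 j (by omega) hjn
        · exact B.adapted3 j (by omega) hjn
      · have hin : ⁅B.e i, B.e n⁆ = 0 := by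
          by_contra h
          have hmem : i ∈ S := ⟨hi4, h⟩
          have := Nat.sInf_le hmem
          omega
        have key : ∀ m, 1 < n - m → ⁅B.e i, B.e (n - m)⁆ = 0 := by
          intro m
          induction m with
          | zero => intro _; simpa using hin
          | succ m ih =>
            intro hm
            have hnm : n - m = (n - (m + 1)) + 1 := by omega
            set j' := n - (m + 1) with hj'
            have h1 : ⁅B.e 1, B.e (j' + 1)⁆ = B.e j' := by
              have := B.adapted1 (j' + 1) (by omega) (by omega)
              simpa using this
            have h2 : ⁅B.e 1, B.e i⁆ = B.e (i - 1) :=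
              B.adapted1 i (by omega) (by omega)
            have h3 : ⁅B.e i, B.e (j' + 1)⁆ = 0 := by
              have := ih (by omega)
              rwa [hnm] at this
            have a1 : i - 1 < i := by omega
            have a2 : 1 < i - 1 := by omega
            have a3 : i - 1 < sInf S := by omega
            have a4 : 1 < j' + 1 := by omega
            have a5 : j' + 1 ≤ n := by omega
            have h4 : ⁅B.e (i - 1), B.e (j' + 1)⁆ = 0 := IH (i - 1) a1 a2 a3 (j' + 1) a4 a5
            have hjac := leibniz_lie (B.e 1) (B.e i) (B.e (j' + 1))
            rw [h1, h2, h3, h4] at hjac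
            simpa using hjac.symm
        have := key (n - j) (by omega)
        rwa [Nat.sub_sub_self hjn] at this
  intro i j hi hiz hj hjn
  exact main i hi hiz j hj hjn
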